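/- Let (L₁, L₂, P, (⊛ᵢ, ↙ⁱ, ↖ᵢ)_{i∈I}) be a multi-adjoint frame, (X, Y, φ, τ) a context of this frame, and φ↑, φ↓ the associated concept-forming operators. Then the set Fix(φ↓∘φ↑) = { μ : X → L₁ ∣ φ↓(φ↑ μ) = μ }, ordered pointwise, is a complete lattice in which the infimum of a family (μⱼ)_{j∈J} ⊆ Fix(φ↓∘φ↑) is the pointwise infimum ⨅ⱼ μⱼ, and its supremum is φ↓(φ↑(⨆ⱼ μⱼ)), the closure of the pointwise supremum. -/
import Mathlib


/-- The fixed points of `φ↓ ∘ φ↑`, ordered pointwise, form a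
complete lattice in which the infimum of a family of fixed points is the
pointwise infimum and the supremum is the closure `φ↓(φ↑(⨆ⱼ μⱼ))` of the
pointwise supremum. -/
theorem stmt_6 {L₁ L₂ P : Type*} [CompleteLattice L₁] [CompleteLattice L₂]
    [CompleteLattice P] {I : Type*}
    (w : I → L₁ → L₂ → P) (ld : I → P → L₂ → L₁) (lu : I → P → L₁ → L₂)
    (adj : ∀ (i : I) (x : L₁) (y : L₂) (z : P),
      (w i x y ≤ z ↔ x ≤ ld i z y) ∧ (w i x y ≤ z ↔ y ≤ lu i z x))
    {X Y : Type*} (φ : X → Y → P) (τ : Y → I)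
    (up : (X → L₁) → Y → L₂) (dn : (Y → L₂) → X → L₁)
    (hup : ∀ (μ : X → L₁) (y : Y), up μ y = ⨅ x, lu (τ y) (φ x y) (μ x))
    (hdn : ∀ (lam : Y → L₂) (x : X), dn lam x = ⨅ y, ld (τ y) (φ x y) (lam y))
    {J : Type*} (μ : J → X → L₁) (hμ : ∀ j, dn (up (μ j)) = μ j) :
    -- the pointwise infimum is a fixed point ...
    dn (up (⨅ j, μ j)) = ⨅ j, μ j ∧
    -- ... and is the greatest lower bound of the family among fixed points
    (∀ j, (⨅ j, μ j) ≤ μ j) ∧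
    (∀ ν : X → L₁, dn (up ν) = ν → (∀ j, ν ≤ μ j) → ν ≤ ⨅ j, μ j) ∧
    -- the closure of the pointwise supremum is a fixed point ...
    dn (up (dn (up (⨆ j, μ j)))) = dn (up (⨆ j, μ j)) ∧
    -- ... and is the least upper bound of the family among fixed points
    (∀ j, μ j ≤ dn (up (⨆ j, μ j))) ∧
    (∀ ν : X → L₁, dn (up ν) = ν → (∀ j, μ j ≤ ν) → dn (up (⨆ j, μ j)) ≤ ν) := by
  -- Galois connection
  have gal : ∀ (m : X → L₁) (l : Y → L₂), m ≤ dn l ↔ l ≤ up m := by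
    intro m l
    constructor
    · intro h y
      rw [hup]
      refine le_iInf fun x => ?_
      have h1 : m x ≤ ld (τ y) (φ x y) (l y) := by
        have := h x; rw [hdn] at this
        exact this.trans (iInf_le _ y)
      exact ((adj (τ y) (m x) (l y) (φ x y)).2).1
        (((adj (τ y) (m x) (l y) (φ x y)).1).2 h1)
    · intro h x
      rw [hdn]
      refine le_iInf fun y => ?_
      have h1 : l y ≤ lu (τ y) (φ x y) (m x) := by
        have := h y; rw [hup] at this
        exact this.trans (iInf_le _ x)
      exact ((adj (τ y) (m x) (l y) (φ x y)).1).1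
        (((adj (τ y) (m x) (l y) (φ x y)).2).2 h1)
  have ext : ∀ m : X → L₁, m ≤ dn (up m) := fun m => (gal m (up m)).2 le_rfl
  have ext' : ∀ l : Y → L₂, l ≤ up (dn l) := fun l => (gal (dn l) l).1 le_rfl
  have upA : ∀ {m n : X → L₁}, m ≤ n → up n ≤ up m := by
    intro m n h
    exact (gal m (up n)).1 (h.trans (ext n))
  have dnA : ∀ {l k : Y → L₂}, l ≤ k → dn k ≤ dn l := by
    intro l k h
    exact (gal (dn k) l).2 (h.trans (ext' k))
  refine ⟨?_, fun j => iInf_le _ j, fun ν _ h => le_iInf h, ?_, ?_, ?_⟩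
  · exact le_antisymm (le_iInf fun j => (hμ j) ▸ dnA (upA (iInf_le _ j))) (ext _)
  · exact le_antisymm (dnA (ext' _)) (ext _)
  · intro j
    exact (le_iSup μ j).trans (ext _)
  · intro ν hν h
    exact (hν ▸ dnA (upA (iSup_le h)) : dn (up (⨆ j, μ j)) ≤ ν)
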